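/- With g = h ⊕ m a reductive decomposition, the induced products on m satisfy [X,Y,[U,V,W]] = [[X,Y,U],V,W] + [U,[X,Y,V],W] + [U,V,[X,Y,W]] for all X,Y,U,V,W ∈ m. -/

import Mathlib

theorem lie_yamaguti_LY6
    (k g : Type*) [Field k] [LieRing g] [LieAlgebra k g]
    (h : LieSubalgebra k g) (m : Submodule k g)
    (hc : IsCompl h.toSubmodule m)
    (hm : ∀ X ∈ h, ∀ Y ∈ m, ⁅X, Y⁆ ∈ m)
    (Pm : g →ₗ[k] g) (Ph : g →ₗ[k] g)
    (hPm : Pm = m.subtype ∘ₗ Submodule.linearProjOfIsCompl m h.toSubmodule hc.symm)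
    (hPh : Ph = h.toSubmodule.subtype ∘ₗ Submodule.linearProjOfIsCompl h.toSubmodule m hc)
    (X Y U V W : g) (hX : X ∈ m) (hY : Y ∈ m) (hU : U ∈ m) (hV : V ∈ m) (hW : W ∈ m) :
    ⁅Ph ⁅X, Y⁆, ⁅Ph ⁅U, V⁆, W⁆⁆
      = ⁅Ph ⁅⁅Ph ⁅X, Y⁆, U⁆, V⁆, W⁆
        + ⁅Ph ⁅U, ⁅Ph ⁅X, Y⁆, V⁆⁆, W⁆
        + ⁅Ph ⁅U, V⁆, ⁅Ph ⁅X, Y⁆, W⁆⁆ := by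
  -- basic properties of Ph
  have hPh_left : ∀ x ∈ h, Ph x = x := by
    intro x hx
    simp [hPh]
    exact congrArg Subtype.val (Submodule.projectionOnto_apply_of_mem_left hc hx)
  have hPh_right : ∀ x ∈ m, Ph x = 0 := by
    intro x hx
    simp [hPh]
    exact Submodule.projectionOnto_apply_of_mem_right hc hx
  have hPh_mem : ∀ x : g, Ph x ∈ h := by
    intro x
    simp only [hPh, LinearMap.comp_apply, Submodule.subtype_apply]
    exact (Submodule.linearProjOfIsCompl h.toSubmodule m hc x).2
  set A := Ph ⁅X, Y⁆ with hAdef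
  set B := Ph ⁅U, V⁆ with hBdef
  have hA : A ∈ h := hPh_mem _
  have hB : B ∈ h := hPh_mem _
  -- decomposition of ⁅U,V⁆
  have hC : ⁅U, V⁆ - B ∈ m := by
    have : Ph (⁅U, V⁆ - B) = 0 := by
      rw [map_sub, hPh_left B hB]; exact sub_self _
    -- x with Ph x = 0 lies in m
    have hx := Submodule.codisjoint_iff_exists_add_eq.mp hc.codisjoint (⁅U, V⁆ - B)
    obtain ⟨y, z, hy, hz, hyz⟩ := hx
    have : Ph (y + z) = 0 := by rw [hyz]; exact this
    rw [map_add, hPh_left y hy, hPh_right z hz, add_zero] at this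
    rw [← hyz, this, zero_add]; exact hz
  -- key: Ph ⁅A, ⁅U, V⁆⁆ = ⁅A, B⁆
  have key : Ph ⁅A, ⁅U, V⁆⁆ = ⁅A, B⁆ := by
    have hsplit : ⁅A, ⁅U, V⁆⁆ = ⁅A, B⁆ + ⁅A, ⁅U, V⁆ - B⁆ := by
      rw [← lie_add]; congr 1; abel
    rw [hsplit, map_add, hPh_left _ (h.lie_mem hA hB),
      hPh_right _ (hm A hA _ hC), add_zero]
  have hjac : ⁅A, ⁅U, V⁆⁆ = ⁅⁅A, U⁆, V⁆ + ⁅U, ⁅A, V⁆⁆ := leibniz_lie A U V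
  have key2 : Ph ⁅⁅A, U⁆, V⁆ + Ph ⁅U, ⁅A, V⁆⁆ = ⁅A, B⁆ := by
    rw [← map_add, ← hjac, key]
  calc ⁅A, ⁅B, W⁆⁆ = ⁅⁅A, B⁆, W⁆ + ⁅B, ⁅A, W⁆⁆ := leibniz_lie A B W
    _ = ⁅Ph ⁅⁅A, U⁆, V⁆ + Ph ⁅U, ⁅A, V⁆⁆, W⁆ + ⁅B, ⁅A, W⁆⁆ := by rw [key2]
    _ = ⁅Ph ⁅⁅A, U⁆, V⁆, W⁆ + ⁅Ph ⁅U, ⁅A, V⁆⁆, W⁆ + ⁅B, ⁅A, W⁆⁆ := by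
        rw [add_lie]
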